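/- Let u_1, …, u_n be positive integers, T = u_1 + … + u_n, and let t and k be integers with 0 < t < T and k ≥ 0. Let E' be the PB instance with projects C = {x_1,…,x_n, p}, costs cost(x_i) = u_i and cost(p) = 2T − t, budget B = 2T − 1, and a single voter who approves only p; run GreedyAV with cheaper-first tie-breaking. Then the number of sets F of exactly k approval flips such that p ∈ GreedyAV(E'_F) equals the number of subsets S ⊆ {1,…,n} with |S| = k and Σ_{i∈S} u_i ≤ t − 1. Consequently, the analogous count for the same instance with budget 2T, minus the count for budget 2T − 1, equals the number of subsets S ⊆ {1,…,n} with |S| = k and Σ_{i∈S} u_i = t. -/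

import Mathlib

structure PB (C V : Type) [Fintype C] [DecidableEq C] [Fintype V] [DecidableEq V] where
  A : V → Finset C
  budget : ℕ
  cost : C → ℕ

namespace PB

variable {C V : Type} [Fintype C] [DecidableEq C] [Fintype V] [DecidableEq V]

/-- The approval score of a project: the number of voters approving it. -/
def score (E : PB C V) (c : C) : ℕ :=
  (Finset.univ.filter fun v => c ∈ E.A v).card

/-- Perform the approval flips in `F`: voter `v`'s approval set becomes
`A v ∆ {c : (v, c) ∈ F}`. -/
def flip (E : PB C V) (F : Finset (V × C)) : PB C V :=
  { E with A := fun v => symmDiff (E.A v) ((F.filter fun q => q.1 = v).image Prod.snd) }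

/-- Greedily process the given list of projects: starting from `W = ∅`,
add the currently considered project whenever it fits in the budget. -/
def greedyFold (budget : ℕ) (cost : C → ℕ) (order : List C) : Finset C :=
  order.foldl (fun W c => if (∑ x ∈ W, cost x) + cost c ≤ budget then insert c W else W) ∅

/-- The order in which GreedyAV considers the projects: non-increasing approval
score, ties broken in favor of `prec`-earlier projects. -/
noncomputable def consOrderAV (E : PB C V) (prec : C → C → Bool) : List C :=
  (Finset.univ : Finset C).toList.mergeSort fun c c' =>
    decide (E.score c' < E.score c) ||
      (decide (E.score c = E.score c') && (prec c c' || decide (c = c')))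

/-- GreedyAV with tie-breaking given by the strict relation `prec`. -/
noncomputable def greedyAV (E : PB C V) (prec : C → C → Bool) : Finset C :=
  greedyFold E.budget E.cost (consOrderAV E prec)

/-- The order in which GreedyCost considers the projects: non-increasing
approval-score-to-cost ratio (compared by cross-multiplication), ties broken in
favor of `prec`-earlier projects. -/
noncomputable def consOrderCost (E : PB C V) (prec : C → C → Bool) : List C :=
  (Finset.univ : Finset C).toList.mergeSort fun c c' =>
    decide (E.score c' * E.cost c < E.score c * E.cost c') ||
      (decide (E.score c * E.cost c' = E.score c' * E.cost c) && (prec c c' || decide (c = c')))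

/-- GreedyCost with tie-breaking given by the strict relation `prec`. -/
noncomputable def greedyCost (E : PB C V) (prec : C → C → Bool) : Finset C :=
  greedyFold E.budget E.cost (consOrderCost E prec)

/-- Cheaper-first tie-breaking: ties in approval score are broken in favor of
the cheaper project, with remaining ties broken by the residual order `prec0`. -/
def cheaperFirst (cost : C → ℕ) (prec0 : C → C → Bool) : C → C → Bool :=
  fun c c' => decide (cost c < cost c') || (decide (cost c = cost c') && prec0 c c')

end PB

/-! Statement 6: counting briberies in the `#P`-hardness reduction for
GreedyAV with cheaper-first tie-breaking, with budget `2T − 1`, and the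
resulting count of subsets summing to exactly `t`. -/

/-- Costs: `cost(x_i) = u_i` and `cost(p) = 2T − t`, where `T = u_1 + … + u_n`. -/
def cost6 {n : ℕ} (u : Fin n → ℕ) (t : ℕ) : (Fin n ⊕ Unit) → ℕ
  | .inl i => u i
  | .inr _ => 2 * (∑ j, u j) - t

/-- The PB instance with a single voter approving only `p` and budget `B`. -/
def E6 {n : ℕ} (u : Fin n → ℕ) (t B : ℕ) : PB (Fin n ⊕ Unit) Unit where
  A := fun _ => {Sum.inr ()}
  budget := B
  cost := cost6 u t

/-- The number of sets of exactly `k` approval flips after which `p` is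
selected by GreedyAV with cheaper-first tie-breaking, for budget `B`. -/
noncomputable def bribeCount {n : ℕ} (u : Fin n → ℕ) (t B k : ℕ)
    (prec0 : (Fin n ⊕ Unit) → (Fin n ⊕ Unit) → Bool) : ℕ :=
  (Finset.univ.filter fun F : Finset (Unit × (Fin n ⊕ Unit)) =>
    F.card = k ∧ (Sum.inr () : Fin n ⊕ Unit) ∈
      PB.greedyAV ((E6 u t B).flip F) (PB.cheaperFirst (cost6 u t) prec0)).card

namespace Stmt6Aux
set_option linter.unusedSectionVars false

open Finset

variable {C : Type} [DecidableEq C]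

/-- The greedy step. -/
def step (B : ℕ) (cost : C → ℕ) (W : Finset C) (c : C) : Finset C :=
  if (∑ x ∈ W, cost x) + cost c ≤ B then insert c W else W

lemma step_subset (B : ℕ) (cost : C → ℕ) (W : Finset C) (c : C) :
    W ⊆ step B cost W c := by
  unfold step; split
  · exact Finset.subset_insert _ _
  · exact Finset.Subset.refl _

lemma step_subset' (B : ℕ) (cost : C → ℕ) (W : Finset C) (c : C) :
    step B cost W c ⊆ insert c W := by
  unfold step; split
  · exact Finset.Subset.refl _
  · exact Finset.subset_insert _ _

lemma subset_foldl (B : ℕ) (cost : C → ℕ) (L : List C) (W : Finset C) :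
    W ⊆ L.foldl (step B cost) W := by
  induction L generalizing W with
  | nil => simp
  | cons c L ih => exact (step_subset B cost W c).trans (ih _)

lemma foldl_subset (B : ℕ) (cost : C → ℕ) (L : List C) (W : Finset C) :
    L.foldl (step B cost) W ⊆ W ∪ L.toFinset := by
  induction L generalizing W with
  | nil => simp
  | cons c L ih =>
    simp only [List.foldl_cons, List.toFinset_cons]
    refine (ih _).trans ?_
    intro a ha
    rcases Finset.mem_union.mp ha with h | h
    · rcases Finset.mem_insert.mp (step_subset' B cost W c h) with h | h
      · simp [h]
      · simp [h]
    · simp [h]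

lemma foldl_full (B : ℕ) (cost : C → ℕ) (L : List C) (W : Finset C) (hnd : L.Nodup)
    (hdis : ∀ c ∈ L, c ∉ W) (hsum : ∑ x ∈ W ∪ L.toFinset, cost x ≤ B) :
    L.foldl (step B cost) W = W ∪ L.toFinset := by
  induction L generalizing W with
  | nil => simp
  | cons c L ih =>
    have hcW : c ∉ W := hdis c (by simp)
    have hsub : insert c W ⊆ W ∪ (c :: L).toFinset := by
      intro a ha; rcases Finset.mem_insert.mp ha with h | h <;> simp [h]
    have hstep : step B cost W c = insert c W := by
      unfold step
      rw [if_pos]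
      calc (∑ x ∈ W, cost x) + cost c = ∑ x ∈ insert c W, cost x := by
            rw [Finset.sum_insert hcW]; ring
        _ ≤ ∑ x ∈ W ∪ (c :: L).toFinset, cost x := Finset.sum_le_sum_of_subset hsub
        _ ≤ B := hsum
    simp only [List.foldl_cons, hstep]
    rw [ih (insert c W) (List.nodup_cons.mp hnd).2
      (by
        intro d hd
        simp only [Finset.mem_insert, not_or]
        exact ⟨fun h => (List.nodup_cons.mp hnd).1 (h ▸ hd), hdis d (by simp [hd])⟩)
      (by
        refine le_trans (Finset.sum_le_sum_of_subset ?_) hsum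
        intro a ha
        rcases Finset.mem_union.mp ha with h | h
        · rcases Finset.mem_insert.mp h with h | h <;> simp [h]
        · simp [h])]
    ext a
    simp only [Finset.mem_union, Finset.mem_insert, List.toFinset_cons, List.mem_toFinset]
    tauto

lemma mem_foldl_split (B : ℕ) (cost : C → ℕ) (L1 L2 : List C) (p : C)
    (hnd : (L1 ++ p :: L2).Nodup)
    (hsum : ∑ x ∈ L1.toFinset, cost x ≤ B) :
    p ∈ (L1 ++ p :: L2).foldl (step B cost) ∅ ↔
      (∑ x ∈ L1.toFinset, cost x) + cost p ≤ B := by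
  have hnd1 : L1.Nodup := (List.nodup_append.mp hnd).1
  have hdisj : L1.Disjoint (p :: L2) := (List.nodup_append'.mp hnd).2.2
  have hpL1 : p ∉ L1 := fun h => hdisj h (by simp)
  have hpL2 : p ∉ L2 := by
    have := (List.nodup_append.mp hnd).2.1
    exact (List.nodup_cons.mp this).1
  have hW1 : L1.foldl (step B cost) ∅ = L1.toFinset := by
    have := foldl_full B cost L1 ∅ hnd1 (by simp) (by simpa using hsum)
    simpa using this
  rw [List.foldl_append, List.foldl_cons, hW1]
  by_cases h : (∑ x ∈ L1.toFinset, cost x) + cost p ≤ B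
  · simp only [step, if_pos h]
    exact iff_of_true (subset_foldl _ _ _ _ (Finset.mem_insert_self p _)) h
  · simp only [step, if_neg h]
    refine iff_of_false ?_ h
    intro hp
    have := foldl_subset B cost L2 L1.toFinset hp
    rcases Finset.mem_union.mp this with h1 | h2
    · exact hpL1 (List.mem_toFinset.mp h1)
    · exact hpL2 (List.mem_toFinset.mp h2)

/-- Splitting a sorted nodup list at an element: the part before `p` is
characterized by the relation. -/
lemma mem_left_of_sorted_split (R : C → C → Bool)
    (hasym : ∀ a b : C, a ≠ b → R a b = true → R b a = true → False)
    (p : C) (L1 L2 : List C) (hnd : (L1 ++ p :: L2).Nodup)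
    (hsorted : (L1 ++ p :: L2).Pairwise fun a b => R a b = true)
    (hmem : ∀ x, x ∈ L1 ++ p :: L2) :
    ∀ x, x ∈ L1 ↔ (x ≠ p ∧ R x p = true) := by
  intro x
  have hps := List.pairwise_append.mp hsorted
  have hdisj : L1.Disjoint (p :: L2) := (List.nodup_append'.mp hnd).2.2
  constructor
  · intro hx
    refine ⟨?_, hps.2.2 x hx p (by simp)⟩
    rintro rfl
    exact hdisj hx (by simp)
  · rintro ⟨hxp, hR⟩
    rcases List.mem_append.mp (hmem x) with h | h
    · exact h
    · rcases List.mem_cons.mp h with rfl | h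
      · exact absurd rfl hxp
      · have hpx : R p x = true := (List.pairwise_cons.mp hps.2.1).1 x h
        exact (hasym x p hxp hR hpx).elim

section RelLemmas

variable (s : C → ℕ) (q : C → C → Bool)

lemma rel_trans (hqt : ∀ a b c : C, q a b = true → q b c = true → q a c = true)
    (a b c : C)
    (hab : (decide (s b < s a) || (decide (s a = s b) && (q a b || decide (a = b)))) = true)
    (hbc : (decide (s c < s b) || (decide (s b = s c) && (q b c || decide (b = c)))) = true) :
    (decide (s c < s a) || (decide (s a = s c) && (q a c || decide (a = c)))) = true := by
  simp only [Bool.or_eq_true, Bool.and_eq_true, decide_eq_true_eq] at *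
  rcases hab with h1 | ⟨h1, h1'⟩ <;> rcases hbc with h2 | ⟨h2, h2'⟩
  · exact Or.inl (by omega)
  · exact Or.inl (by omega)
  · exact Or.inl (by omega)
  · refine Or.inr ⟨by omega, ?_⟩
    rcases h1' with h | rfl
    · rcases h2' with h' | rfl
      · exact Or.inl (hqt _ _ _ h h')
      · exact Or.inl h
    · exact h2'

lemma rel_total (hqtot : ∀ a b : C, a ≠ b → q a b = true ∨ q b a = true) (a b : C) :
    ((decide (s b < s a) || (decide (s a = s b) && (q a b || decide (a = b)))) ||
      (decide (s a < s b) || (decide (s b = s a) && (q b a || decide (b = a))))) = true := by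
  simp only [Bool.or_eq_true, Bool.and_eq_true, decide_eq_true_eq]
  rcases Nat.lt_trichotomy (s a) (s b) with h | h | h
  · tauto
  · by_cases hab : a = b
    · subst hab; tauto
    · rcases hqtot a b hab with h' | h' <;> tauto
  · tauto

lemma rel_asymm (hqas : ∀ a b : C, q a b = true → q b a = true → False)
    (a b : C) (hab : a ≠ b)
    (h1 : (decide (s b < s a) || (decide (s a = s b) && (q a b || decide (a = b)))) = true)
    (h2 : (decide (s a < s b) || (decide (s b = s a) && (q b a || decide (b = a)))) = true) :
    False := by
  simp only [Bool.or_eq_true, Bool.and_eq_true, decide_eq_true_eq] at *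
  rcases h1 with h1 | ⟨h1, h1'⟩ <;> rcases h2 with h2 | ⟨h2, h2'⟩
  · omega
  · omega
  · omega
  · rcases h1' with h | rfl
    · rcases h2' with h' | rfl
      · exact hqas a b h h'
      · exact hab rfl
    · exact hab rfl

end RelLemmas

section CheaperFirst

variable (cost : C → ℕ) (q0 : C → C → Bool)

lemma cf_iff (a b : C) : PB.cheaperFirst cost q0 a b = true ↔
    (cost a < cost b ∨ (cost a = cost b ∧ q0 a b = true)) := by
  simp [PB.cheaperFirst]

lemma cf_trans (h : ∀ a b c : C, q0 a b = true → q0 b c = true → q0 a c = true)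
    (a b c : C) (hab : PB.cheaperFirst cost q0 a b = true)
    (hbc : PB.cheaperFirst cost q0 b c = true) :
    PB.cheaperFirst cost q0 a c = true := by
  rw [cf_iff] at *
  rcases hab with h1 | ⟨h1, h1'⟩ <;> rcases hbc with h2 | ⟨h2, h2'⟩
  · exact Or.inl (h1.trans h2)
  · exact Or.inl (h2 ▸ h1)
  · exact Or.inl (h1 ▸ h2)
  · exact Or.inr ⟨h1.trans h2, h a b c h1' h2'⟩

lemma cf_asymm (hirr : ∀ a : C, ¬ q0 a a = true)
    (h : ∀ a b c : C, q0 a b = true → q0 b c = true → q0 a c = true)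
    (a b : C) (hab : PB.cheaperFirst cost q0 a b = true)
    (hba : PB.cheaperFirst cost q0 b a = true) : False := by
  rw [cf_iff] at *
  rcases hab with h1 | ⟨h1, h1'⟩ <;> rcases hba with h2 | ⟨h2, h2'⟩
  · omega
  · omega
  · omega
  · exact hirr a (h a b a h1' h2')

lemma cf_total (htot : ∀ a b : C, a ≠ b → q0 a b = true ∨ q0 b a = true)
    (a b : C) (hab : a ≠ b) :
    PB.cheaperFirst cost q0 a b = true ∨ PB.cheaperFirst cost q0 b a = true := by
  rw [cf_iff, cf_iff]
  rcases Nat.lt_trichotomy (cost a) (cost b) with h | h | h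
  · tauto
  · rcases htot a b hab with h' | h' <;> tauto
  · tauto

end CheaperFirst

end Stmt6Aux

open Stmt6Aux in
/-- Key characterization: `p` is selected after flips `F` iff `p` is not flipped
and the flipped `x_i`'s together with `p` fit in the budget. -/
lemma stmt6_key {n : ℕ} (u : Fin n → ℕ) (t B : ℕ)
    (ht : 0 < t) (htT : t < ∑ i, u i) (hTB : ∑ i, u i ≤ B) (hB : B + t < 3 * ∑ i, u i)
    (prec0 : (Fin n ⊕ Unit) → (Fin n ⊕ Unit) → Bool)
    (hlin : IsStrictTotalOrder (Fin n ⊕ Unit) fun a b => prec0 a b = true)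
    (F : Finset (Unit × (Fin n ⊕ Unit))) :
    ((Sum.inr () : Fin n ⊕ Unit) ∈
        PB.greedyAV ((E6 u t B).flip F) (PB.cheaperFirst (cost6 u t) prec0)) ↔
      (((), (Sum.inr () : Fin n ⊕ Unit)) ∉ F ∧
        (∑ i ∈ Finset.univ.filter fun i => ((), (Sum.inl i : Fin n ⊕ Unit)) ∈ F, u i)
          + (2 * ∑ i, u i - t) ≤ B) := by
  classical
  set T := ∑ i, u i with hT
  set p : Fin n ⊕ Unit := Sum.inr () with hp
  set q := PB.cheaperFirst (cost6 u t) prec0 with hqdef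
  set E := (E6 u t B).flip F with hEdef
  -- properties of prec0
  have hq0irr : ∀ a : Fin n ⊕ Unit, ¬ prec0 a a = true := fun a h =>
    hlin.toIsStrictOrder.toIrrefl.irrefl a h
  have hq0tr : ∀ a b c : Fin n ⊕ Unit,
      prec0 a b = true → prec0 b c = true → prec0 a c = true :=
    fun a b c => hlin.toIsStrictOrder.toIsTrans.trans a b c
  have hq0tot : ∀ a b : Fin n ⊕ Unit, a ≠ b → prec0 a b = true ∨ prec0 b a = true := by
    intro a b hab
    rcases (show prec0 a b = true ∨ a = b ∨ prec0 b a = true by by_contra hc; simp only [not_or] at hc; exact hc.2.1 (hlin.toTrichotomous.trichotomous a b hc.1 hc.2.2)) with h | h | h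
    · exact Or.inl h
    · exact absurd h hab
    · exact Or.inr h
  have hqtr := cf_trans (cost6 u t) prec0 hq0tr
  have hqas := cf_asymm (cost6 u t) prec0 hq0irr hq0tr
  have hqtot := cf_total (cost6 u t) prec0 hq0tot
  -- the approval set after the flips
  have hA : E.A () = symmDiff {p} (F.image Prod.snd) := by
    rw [hEdef]
    show symmDiff ((E6 u t B).A ()) ((F.filter fun x => x.1 = ()).image Prod.snd) = _
    rw [Finset.filter_true_of_mem (fun x _ => Subsingleton.elim _ _)]
    rfl
  have himg : ∀ c : Fin n ⊕ Unit, c ∈ F.image Prod.snd ↔ ((), c) ∈ F := by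
    intro c
    simp only [Finset.mem_image]
    constructor
    · rintro ⟨⟨⟨⟩, c'⟩, h, rfl⟩; exact h
    · intro h; exact ⟨((), c), h, rfl⟩
  have hmemA : ∀ c : Fin n ⊕ Unit, (c ∈ E.A () ↔
      ((c = p ∧ ((), p) ∉ F) ∨ (c ≠ p ∧ ((), c) ∈ F))) := by
    intro c
    rw [hA, Finset.mem_symmDiff]
    simp only [Finset.mem_singleton, himg]
    by_cases hc : c = p
    · subst hc; tauto
    · tauto
  have hscore : ∀ c, E.score c = if c ∈ E.A () then 1 else 0 := by
    intro c
    rw [PB.score]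
    rw [show (Finset.univ : Finset Unit) = {()} from rfl, Finset.filter_singleton]
    split <;> simp
  have hsp : E.score p = if ((), p) ∈ F then 0 else 1 := by
    rw [hscore]
    by_cases h : ((), p) ∈ F <;> simp [hmemA, h]
  have hsx : ∀ i : Fin n, E.score (Sum.inl i) =
      if ((), (Sum.inl i : Fin n ⊕ Unit)) ∈ F then 1 else 0 := by
    intro i
    rw [hscore]
    by_cases h : ((), (Sum.inl i : Fin n ⊕ Unit)) ∈ F <;> simp [hmemA, h, hp]
  -- cost facts
  have hui : ∀ i, u i ≤ T := fun i =>
    Finset.single_le_sum (fun j _ => Nat.zero_le _) (Finset.mem_univ i)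
  have hcp : cost6 u t p = 2 * T - t := rfl
  have hqip : ∀ i : Fin n, q (Sum.inl i) p = true := by
    intro i
    rw [hqdef, cf_iff]
    left
    show u i < 2 * T - t
    have := hui i
    omega
  -- the sorting relation
  set R : (Fin n ⊕ Unit) → (Fin n ⊕ Unit) → Bool := fun c c' =>
    decide (E.score c' < E.score c) ||
      (decide (E.score c = E.score c') && (q c c' || decide (c = c'))) with hRdef
  have hMdef : PB.consOrderAV E q =
      (Finset.univ : Finset (Fin n ⊕ Unit)).toList.mergeSort R := rfl
  set M := PB.consOrderAV E q with hM
  have hperm : List.Perm M (Finset.univ : Finset (Fin n ⊕ Unit)).toList :=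
    List.mergeSort_perm _ _
  have hndM : M.Nodup := hperm.nodup_iff.mpr (Finset.nodup_toList _)
  have hmemM : ∀ x, x ∈ M := fun x => hperm.mem_iff.mpr (by simp [Finset.mem_toList])
  have hsorted : M.Pairwise fun a b => R a b = true :=
    List.pairwise_mergeSort (le := R) (rel_trans E.score q hqtr)
      (rel_total E.score q hqtot) (Finset.univ : Finset (Fin n ⊕ Unit)).toList
  have hRasym : ∀ a b : Fin n ⊕ Unit, a ≠ b → R a b = true → R b a = true → False :=
    fun a b hab => rel_asymm E.score q hqas a b hab
  obtain ⟨L1, L2, hsplit⟩ := List.append_of_mem (hmemM p)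
  have hL1 : ∀ x, x ∈ L1 ↔ (x ≠ p ∧ R x p = true) :=
    mem_left_of_sorted_split R hRasym p L1 L2 (hsplit ▸ hndM) (hsplit ▸ hsorted)
      (fun x => hsplit ▸ hmemM x)
  have hgr0 : PB.greedyAV E q = (L1 ++ p :: L2).foldl (step B (cost6 u t)) ∅ := by
    rw [← hsplit]; rfl
  by_cases hpF : ((), p) ∈ F
  · -- p was flipped away: never selected
    have hX : L1.toFinset = Finset.univ.image Sum.inl := by
      ext x
      rw [List.mem_toFinset, hL1]
      cases x with
      | inl i =>
        have h1 : (Sum.inl i : Fin n ⊕ Unit) ≠ p := by simp [hp]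
        have h2 : R (Sum.inl i) p = true := by
          rw [hRdef]
          simp only [Bool.or_eq_true, Bool.and_eq_true, decide_eq_true_eq]
          rw [hsp, hsx i, if_pos hpF]
          by_cases hi : ((), (Sum.inl i : Fin n ⊕ Unit)) ∈ F
          · rw [if_pos hi]; exact Or.inl (by omega)
          · rw [if_neg hi]
            exact Or.inr ⟨rfl, Or.inl (hqip i)⟩
        simp [h1, h2]
      | inr u0 =>
        cases u0
        simp [hp]
    have hXsum : ∑ x ∈ L1.toFinset, cost6 u t x = T := by
      rw [hX, Finset.sum_image (fun a _ b _ h => Sum.inl.inj h)]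
      exact Finset.sum_congr rfl (fun i _ => rfl)
    have hgr : (p ∈ PB.greedyAV E q) ↔
        (∑ x ∈ L1.toFinset, cost6 u t x) + cost6 u t p ≤ B := by
      rw [hgr0]
      exact mem_foldl_split B (cost6 u t) L1 L2 p (hsplit ▸ hndM)
        (by rw [hXsum]; exact hTB)
    rw [hgr, hXsum, hcp]
    simp only [hpF, not_true_eq_false, false_and, iff_false]
    omega
  · -- p not flipped
    have hX : L1.toFinset =
        (Finset.univ.filter fun i => ((), (Sum.inl i : Fin n ⊕ Unit)) ∈ F).image Sum.inl := by
      ext x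
      rw [List.mem_toFinset, hL1]
      cases x with
      | inl i =>
        have h1 : (Sum.inl i : Fin n ⊕ Unit) ≠ p := by simp [hp]
        by_cases hi : ((), (Sum.inl i : Fin n ⊕ Unit)) ∈ F
        · have h2 : R (Sum.inl i) p = true := by
            rw [hRdef]
            simp only [Bool.or_eq_true, Bool.and_eq_true, decide_eq_true_eq]
            rw [hsp, hsx i, if_neg hpF, if_pos hi]
            exact Or.inr ⟨rfl, Or.inl (hqip i)⟩
          simp [h1, h2, hi]
        · have h2 : R (Sum.inl i) p = false := by
            rw [hRdef]
            simp only [Bool.or_eq_false_iff, Bool.and_eq_false_iff]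
            rw [hsp, hsx i, if_neg hpF, if_neg hi]
            constructor
            · simp
            · left; simp
          simp [h2, hi]
      | inr u0 =>
        cases u0
        simp [hp]
    have hXsum : ∑ x ∈ L1.toFinset, cost6 u t x =
        ∑ i ∈ Finset.univ.filter fun i => ((), (Sum.inl i : Fin n ⊕ Unit)) ∈ F, u i := by
      rw [hX, Finset.sum_image (fun a _ b _ h => Sum.inl.inj h)]
      exact Finset.sum_congr rfl (fun i _ => rfl)
    have hle : (∑ i ∈ Finset.univ.filter
        fun i => ((), (Sum.inl i : Fin n ⊕ Unit)) ∈ F, u i) ≤ T :=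
      le_trans (Finset.sum_le_sum_of_subset (Finset.filter_subset _ _)) (le_of_eq rfl)
    have hgr : (p ∈ PB.greedyAV E q) ↔
        (∑ x ∈ L1.toFinset, cost6 u t x) + cost6 u t p ≤ B := by
      rw [hgr0]
      exact mem_foldl_split B (cost6 u t) L1 L2 p (hsplit ▸ hndM)
        (by rw [hXsum]; exact le_trans hle hTB)
    rw [hgr, hXsum, hcp]
    simp [hpF]

open Stmt6Aux in
lemma stmt6_count {n : ℕ} (u : Fin n → ℕ) (t B k : ℕ)
    (ht : 0 < t) (htT : t < ∑ i, u i) (hTB : ∑ i, u i ≤ B) (hB : B + t < 3 * ∑ i, u i)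
    (prec0 : (Fin n ⊕ Unit) → (Fin n ⊕ Unit) → Bool)
    (hlin : IsStrictTotalOrder (Fin n ⊕ Unit) fun a b => prec0 a b = true) :
    bribeCount u t B k prec0 = (Finset.univ.filter fun S : Finset (Fin n) =>
      S.card = k ∧ (∑ i ∈ S, u i) + (2 * ∑ i, u i - t) ≤ B).card := by
  classical
  rw [bribeCount]
  set emb : Fin n ↪ Unit × (Fin n ⊕ Unit) :=
    ⟨fun i => ((), Sum.inl i), fun a b h => by simpa using h⟩ with hemb
  have hembapp : ∀ a, emb a = ((), Sum.inl a) := fun a => rfl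
  have hrec : ∀ F : Finset (Unit × (Fin n ⊕ Unit)),
      ((), (Sum.inr () : Fin n ⊕ Unit)) ∉ F →
      (Finset.univ.filter fun i => ((), (Sum.inl i : Fin n ⊕ Unit)) ∈ F).map emb = F := by
    intro F hpF
    ext x
    obtain ⟨⟨⟩, c⟩ := x
    cases c with
    | inl i => simp [hembapp]
    | inr u0 => cases u0; simp [hembapp, hpF]
  have hfilt : ∀ S : Finset (Fin n),
      (Finset.univ.filter fun i => ((), (Sum.inl i : Fin n ⊕ Unit)) ∈ S.map emb) = S := by
    intro S; ext i; simp [hembapp]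
  apply Finset.card_nbij'
    (i := fun F => Finset.univ.filter fun i => ((), (Sum.inl i : Fin n ⊕ Unit)) ∈ F)
    (j := fun S => S.map emb)
  · intro F hF
    rw [Finset.mem_coe, Finset.mem_filter] at hF
    obtain ⟨-, hk, hgr⟩ := hF
    rw [stmt6_key u t B ht htT hTB hB prec0 hlin F] at hgr
    obtain ⟨hpF, hsum⟩ := hgr
    rw [Finset.mem_coe, Finset.mem_filter]
    refine ⟨Finset.mem_univ _, ?_, hsum⟩
    calc (Finset.univ.filter fun i => ((), (Sum.inl i : Fin n ⊕ Unit)) ∈ F).card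
        = ((Finset.univ.filter fun i =>
            ((), (Sum.inl i : Fin n ⊕ Unit)) ∈ F).map emb).card := (Finset.card_map _).symm
      _ = F.card := by rw [hrec F hpF]
      _ = k := hk
  · intro S hS
    rw [Finset.mem_coe, Finset.mem_filter] at hS
    obtain ⟨-, hk, hsum⟩ := hS
    rw [Finset.mem_coe, Finset.mem_filter]
    refine ⟨Finset.mem_univ _, ?_, ?_⟩
    · rw [Finset.card_map]; exact hk
    · rw [stmt6_key u t B ht htT hTB hB prec0 hlin]
      refine ⟨?_, ?_⟩
      · simp [hembapp]
      · rw [hfilt]; exact hsum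
  · intro F hF
    rw [Finset.mem_coe, Finset.mem_filter] at hF
    obtain ⟨-, hk, hgr⟩ := hF
    rw [stmt6_key u t B ht htT hTB hB prec0 hlin F] at hgr
    exact hrec F hgr.1
  · intro S hS
    exact hfilt S

theorem stmt6 (n k t : ℕ) (u : Fin n → ℕ) (hu : ∀ i, 0 < u i)
    (ht : 0 < t) (htT : t < ∑ i, u i)
    (prec0 : (Fin n ⊕ Unit) → (Fin n ⊕ Unit) → Bool)
    (hlin : IsStrictTotalOrder (Fin n ⊕ Unit) fun a b => prec0 a b = true) :
    bribeCount u t (2 * (∑ i, u i) - 1) k prec0 =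
        (Finset.univ.filter fun S : Finset (Fin n) =>
          S.card = k ∧ ∑ i ∈ S, u i ≤ t - 1).card ∧
      bribeCount u t (2 * ∑ i, u i) k prec0 -
          bribeCount u t (2 * (∑ i, u i) - 1) k prec0 =
        (Finset.univ.filter fun S : Finset (Fin n) =>
          S.card = k ∧ ∑ i ∈ S, u i = t).card := by
  classical
  set T := ∑ i, u i with hT
  have h1 : bribeCount u t (2 * T - 1) k prec0 =
      (Finset.univ.filter fun S : Finset (Fin n) =>
        S.card = k ∧ ∑ i ∈ S, u i ≤ t - 1).card := by
    rw [stmt6_count u t (2 * T - 1) k ht htT (by omega) (by omega) prec0 hlin]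
    congr 1
    apply Finset.filter_congr
    intro S _
    constructor
    · rintro ⟨hk, hs⟩; exact ⟨hk, by omega⟩
    · rintro ⟨hk, hs⟩; exact ⟨hk, by omega⟩
  have h2 : bribeCount u t (2 * T) k prec0 =
      (Finset.univ.filter fun S : Finset (Fin n) =>
        S.card = k ∧ ∑ i ∈ S, u i ≤ t).card := by
    rw [stmt6_count u t (2 * T) k ht htT (by omega) (by omega) prec0 hlin]
    congr 1
    apply Finset.filter_congr
    intro S _
    constructor
    · rintro ⟨hk, hs⟩; exact ⟨hk, by omega⟩
    · rintro ⟨hk, hs⟩; exact ⟨hk, by omega⟩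
  refine ⟨h1, ?_⟩
  rw [h1, h2]
  have hunion : (Finset.univ.filter fun S : Finset (Fin n) =>
        S.card = k ∧ ∑ i ∈ S, u i ≤ t) =
      (Finset.univ.filter fun S : Finset (Fin n) =>
        S.card = k ∧ ∑ i ∈ S, u i ≤ t - 1) ∪
      (Finset.univ.filter fun S : Finset (Fin n) =>
        S.card = k ∧ ∑ i ∈ S, u i = t) := by
    ext S
    simp only [Finset.mem_union, Finset.mem_filter, Finset.mem_univ, true_and]
    omega
  have hdisj : Disjoint
      (Finset.univ.filter fun S : Finset (Fin n) =>
        S.card = k ∧ ∑ i ∈ S, u i ≤ t - 1)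
      (Finset.univ.filter fun S : Finset (Fin n) =>
        S.card = k ∧ ∑ i ∈ S, u i = t) := by
    rw [Finset.disjoint_left]
    intro S hS hS'
    simp only [Finset.mem_filter, Finset.mem_univ, true_and] at hS hS'
    omega
  rw [hunion, Finset.card_union_of_disjoint hdisj]
  omega
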